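/- arXiv:1707.06849 — 6 statements merged into one kernel-verified Lean document; each statement's English description precedes it below -/
import Mathlib

section
/- Let S ∈ ℝ^{R×N} and H ∈ ℝ^{M×N} with M ≤ R and rank(H) = N. Then rank(S) = N if and only if there exists a matrix S̃ ∈ ℝ^{R×M} with rank(S̃) = M and S = S̃ H. -/
open Matrix

private lemma rank_eq_iff_inj {m n : ℕ} (A : Matrix (Fin m) (Fin n) ℝ) :
    A.rank = n ↔ Function.Injective A.mulVecLin := by
  rw [← LinearMap.ker_eq_bot]
  constructor
  · intro hr
    have h1 := LinearMap.finrank_range_add_finrank_ker A.mulVecLin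
    rw [Module.finrank_fin_fun] at h1
    have : Module.finrank ℝ (LinearMap.ker A.mulVecLin) = 0 := by
      have : Matrix.rank A = Module.finrank ℝ (LinearMap.range A.mulVecLin) := rfl
      omega
    exact Submodule.finrank_eq_zero.mp this
  · intro hk
    have : Matrix.rank A = Module.finrank ℝ (LinearMap.range A.mulVecLin) := rfl
    rw [this, LinearMap.finrank_range_of_inj (LinearMap.ker_eq_bot.mp hk),
      Module.finrank_fin_fun]

private lemma exists_inj_of_finrank_le {U V : Type*} [AddCommGroup U] [Module ℝ U]
    [AddCommGroup V] [Module ℝ V] [FiniteDimensional ℝ U] [FiniteDimensional ℝ V]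
    (h : Module.finrank ℝ U ≤ Module.finrank ℝ V) :
    ∃ f : U →ₗ[ℝ] V, Function.Injective f := by
  let b := Module.finBasis ℝ U
  let c := Module.finBasis ℝ V
  refine ⟨(c.repr.symm.toLinearMap.comp
    (Finsupp.lmapDomain ℝ ℝ (Fin.castLE h))).comp b.repr.toLinearMap, ?_⟩
  have hco : ⇑((c.repr.symm.toLinearMap.comp
      (Finsupp.lmapDomain ℝ ℝ (Fin.castLE h))).comp b.repr.toLinearMap)
      = ⇑c.repr.symm ∘ Finsupp.mapDomain (Fin.castLE h) ∘ ⇑b.repr := by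
    funext x
    simp [Finsupp.lmapDomain_apply]
  rw [hco]
  exact c.repr.symm.injective.comp
    ((Finsupp.mapDomain_injective (Fin.castLE_injective h)).comp b.repr.injective)

theorem stmt_2 {R M N : ℕ} (hMR : M ≤ R)
    (S : Matrix (Fin R) (Fin N) ℝ) (H : Matrix (Fin M) (Fin N) ℝ)
    (hH : H.rank = N) :
    S.rank = N ↔
      ∃ S' : Matrix (Fin R) (Fin M) ℝ, S'.rank = M ∧ S = S' * H := by
  have hh : Function.Injective H.mulVecLin := (rank_eq_iff_inj H).mp hH
  constructor
  · intro hS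
    have hs : Function.Injective S.mulVecLin := (rank_eq_iff_inj S).mp hS
    set s := S.mulVecLin with hsdef
    set h := H.mulVecLin with hhdef
    obtain ⟨g, hg⟩ := h.exists_leftInverse_of_injective (LinearMap.ker_eq_bot.mpr hh)
    have hgh : ∀ x, g (h x) = x := fun x => congrFun (congrArg DFunLike.coe hg) x
    set p : (Fin M → ℝ) →ₗ[ℝ] (Fin M → ℝ) := h.comp g with hpdef
    -- range p = range h
    have hrange : LinearMap.range p = LinearMap.range h := by
      apply le_antisymm
      · rintro _ ⟨x, rfl⟩; exact ⟨g x, rfl⟩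
      · rintro _ ⟨x, rfl⟩; exact ⟨h x, by simp [hpdef, hgh]⟩
    have hrankh : Module.finrank ℝ (LinearMap.range h) = N := by
      rw [hhdef, LinearMap.finrank_range_of_inj hh, Module.finrank_fin_fun]
    have hkerp : Module.finrank ℝ (LinearMap.ker p) = M - N := by
      have h1 := LinearMap.finrank_range_add_finrank_ker p
      rw [Module.finrank_fin_fun, hrange, hrankh] at h1
      omega
    have hranks : Module.finrank ℝ (LinearMap.range s) = N := by
      rw [hsdef, LinearMap.finrank_range_of_inj hs, Module.finrank_fin_fun]
    obtain ⟨W, hW⟩ := Submodule.exists_isCompl (LinearMap.range s)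
    have hWrank : Module.finrank ℝ W = R - N := by
      have h1 := Submodule.finrank_add_eq_of_isCompl hW
      rw [Module.finrank_fin_fun] at h1
      rw [hranks] at h1
      omega
    have hNM : N ≤ M := by
      have := H.rank_le_card_height
      rw [Fintype.card_fin] at this
      omega
    obtain ⟨ι, hι⟩ := exists_inj_of_finrank_le (U := LinearMap.ker p) (V := W)
      (by rw [hkerp, hWrank]; omega)
    -- the projection onto ker p
    have hqmem : ∀ x : Fin M → ℝ, x - p x ∈ LinearMap.ker p := by
      intro x
      simp only [LinearMap.mem_ker, map_sub, hpdef, LinearMap.comp_apply, hgh]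
      abel
    set q : (Fin M → ℝ) →ₗ[ℝ] LinearMap.ker p :=
      (LinearMap.id - p).codRestrict (LinearMap.ker p) hqmem with hqdef
    set f : (Fin M → ℝ) →ₗ[ℝ] (Fin R → ℝ) :=
      s.comp g + W.subtype.comp (ι.comp q) with hfdef
    have hfh : f.comp h = s := by
      refine LinearMap.ext fun x => ?_
      have hq0 : q (h x) = 0 := by
        apply Subtype.ext
        simp [hqdef, LinearMap.codRestrict_apply, hpdef, hgh]
      simp [hfdef, hq0, hgh]
    have hfinj : Function.Injective f := by
      rw [← LinearMap.ker_eq_bot, LinearMap.ker_eq_bot']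
      intro x hx
      have hsum : s (g x) + W.subtype (ι (q x)) = 0 := hx
      have ha : s (g x) ∈ LinearMap.range s := ⟨g x, rfl⟩
      have hb : (W.subtype (ι (q x)) : Fin R → ℝ) ∈ W := (ι (q x)).2
      have ha0 : s (g x) = 0 := by
        have : s (g x) = -(W.subtype (ι (q x))) := by
          rw [eq_neg_iff_add_eq_zero]; exact hsum
        exact (Submodule.disjoint_def.mp hW.disjoint) _ ha (this ▸ neg_mem hb)
      have hb0 : W.subtype (ι (q x)) = 0 := by
        rw [ha0, zero_add] at hsum; exact hsum
      have hq0 : q x = 0 := by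
        have : ι (q x) = 0 := Submodule.coe_eq_zero.mp hb0
        exact hι (by rw [this, map_zero])
      have hgx : g x = 0 := hs (by rw [ha0]; simp)
      have : x - p x = 0 := congrArg Subtype.val hq0
      have : x = p x := by rwa [sub_eq_zero] at this
      rw [this, hpdef, LinearMap.comp_apply, hgx, map_zero]
    refine ⟨LinearMap.toMatrix' f, ?_, ?_⟩
    · have hm : (LinearMap.toMatrix' f).mulVecLin = f := by
        rw [← Matrix.toLin'_apply', Matrix.toLin'_toMatrix']
      rw [Matrix.rank, hm, LinearMap.finrank_range_of_inj hfinj, Module.finrank_fin_fun]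
    · have hm : (LinearMap.toMatrix' f).mulVecLin = f := by
        rw [← Matrix.toLin'_apply', Matrix.toLin'_toMatrix']
      apply Matrix.toLin'.injective
      rw [Matrix.toLin'_mul, Matrix.toLin'_apply', Matrix.toLin'_apply', hm]
      exact hfh.symm
  · rintro ⟨S', hS', rfl⟩
    have hs' : Function.Injective S'.mulVecLin := (rank_eq_iff_inj S').mp hS'
    apply (rank_eq_iff_inj _).mpr
    rw [Matrix.mulVecLin_mul]
    exact hs'.comp hh
end

section
/- Let G ∈ ℝ^{N×N}. The family of matrices exp(tG) converges as t → ∞ if and only if every nonzero eigenvalue λ of G (over ℂ) satisfies Re(λ) < 0 and, for the eigenvalue 0 (if present), its algebraic and geometric multiplicities coincide. -/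
open Matrix Filter Polynomial NormedSpace Module

namespace Stmt3Aux

lemma exp_mulVec_eq_sum {𝕂 : Type*} [RCLike 𝕂] {n : ℕ} (B : Matrix (Fin n) (Fin n) 𝕂)
    (v : Fin n → 𝕂) {m : ℕ} (h : B ^ m *ᵥ v = 0) (t : ℝ) :
    exp (t • B) *ᵥ v
      = ∑ k ∈ Finset.range m, ((t ^ k / k.factorial : ℝ)) • (B ^ k *ᵥ v) := by
  letI : SeminormedRing (Matrix (Fin n) (Fin n) 𝕂) := Matrix.linftyOpSemiNormedRing
  letI : NormedRing (Matrix (Fin n) (Fin n) 𝕂) := Matrix.linftyOpNormedRing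
  letI : NormedAlgebra ℝ (Matrix (Fin n) (Fin n) 𝕂) := Matrix.linftyOpNormedAlgebra
  have hsum : Summable (fun k : ℕ => ((k.factorial : ℝ)⁻¹) • (t • B) ^ k) :=
    expSeries_summable' (𝕂 := ℝ) (t • B)
  let L : Matrix (Fin n) (Fin n) 𝕂 →ₗ[ℝ] (Fin n → 𝕂) :=
    { toFun := fun M => M *ᵥ v
      map_add' := fun M M' => Matrix.add_mulVec M M' v
      map_smul' := fun c M => Matrix.smul_mulVec c M v }
  have hL : Continuous L := L.continuous_of_finiteDimensional
  have key : exp (t • B) *ᵥ v = ∑' k : ℕ, ((k.factorial : ℝ)⁻¹) • ((t • B) ^ k *ᵥ v) := by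
    have h2 := (⟨L, hL⟩ : Matrix (Fin n) (Fin n) 𝕂 →L[ℝ] (Fin n → 𝕂)).map_tsum hsum
    rw [exp_eq_tsum (𝕂 := ℝ)]
    simpa [L] using h2
  rw [key, tsum_eq_sum (s := Finset.range m) ?later]
  · refine Finset.sum_congr rfl fun k hk => ?_
    rw [_root_.smul_pow, Matrix.smul_mulVec, smul_smul, div_eq_mul_inv, mul_comm]
  case later =>
    intro k hk
    have hk' : m ≤ k := by simpa using hk
    have : B ^ k *ᵥ v = 0 := by
      have : B ^ k = B ^ (k - m) * B ^ m := by rw [← pow_add]; congr 1; omega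
      rw [this, ← Matrix.mulVec_mulVec, h, Matrix.mulVec_zero]
    rw [_root_.smul_pow, Matrix.smul_mulVec, this, smul_zero, smul_zero]

end Stmt3Aux
namespace Stmt3Aux

lemma exp_smul_split {n : ℕ} (A : Matrix (Fin n) (Fin n) ℂ) (μ : ℂ) (t : ℝ) :
    exp (t • A) = Complex.exp ((t : ℂ) * μ) • exp (t • (A - μ • (1 : Matrix (Fin n) (Fin n) ℂ))) := by
  letI : SeminormedRing (Matrix (Fin n) (Fin n) ℂ) := Matrix.linftyOpSemiNormedRing
  letI : NormedRing (Matrix (Fin n) (Fin n) ℂ) := Matrix.linftyOpNormedRing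
  letI : NormedAlgebra ℝ (Matrix (Fin n) (Fin n) ℂ) := Matrix.linftyOpNormedAlgebra
  letI : NormedAlgebra ℂ (Matrix (Fin n) (Fin n) ℂ) := Matrix.linftyOpNormedAlgebra
  have hdecomp : t • A = algebraMap ℂ (Matrix (Fin n) (Fin n) ℂ) ((t : ℂ) * μ)
      + t • (A - μ • (1 : Matrix (Fin n) (Fin n) ℂ)) := by
    rw [Algebra.algebraMap_eq_smul_one, smul_sub, mul_smul]
    rw [show ((t:ℂ)) = algebraMap ℝ ℂ t from rfl, algebraMap_smul ℂ t (μ • (1 : Matrix (Fin n) (Fin n) ℂ))]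
    abel
  rw [hdecomp, Matrix.exp_add_of_commute _ _ (Algebra.commute_algebraMap_left _ _)]
  have hc : NormedSpace.exp (algebraMap ℂ (Matrix (Fin n) (Fin n) ℂ) ((t : ℂ) * μ))
      = algebraMap ℂ (Matrix (Fin n) (Fin n) ℂ) (NormedSpace.exp ((t : ℂ) * μ)) :=
    (NormedSpace.algebraMap_exp_comm _).symm
  rw [hc, ← Complex.exp_eq_exp_ℂ,
    Algebra.algebraMap_eq_smul_one, smul_mul_assoc, one_mul]

lemma exp_map_complex {n : ℕ} (M : Matrix (Fin n) (Fin n) ℝ) :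
    (exp M).map (algebraMap ℝ ℂ) = exp (M.map (algebraMap ℝ ℂ)) := by
  letI : SeminormedRing (Matrix (Fin n) (Fin n) ℝ) := Matrix.linftyOpSemiNormedRing
  letI : NormedRing (Matrix (Fin n) (Fin n) ℝ) := Matrix.linftyOpNormedRing
  letI : NormedAlgebra ℝ (Matrix (Fin n) (Fin n) ℝ) := Matrix.linftyOpNormedAlgebra
  letI : SeminormedRing (Matrix (Fin n) (Fin n) ℂ) := Matrix.linftyOpSemiNormedRing
  letI : NormedRing (Matrix (Fin n) (Fin n) ℂ) := Matrix.linftyOpNormedRing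
  letI : NormedAlgebra ℝ (Matrix (Fin n) (Fin n) ℂ) := Matrix.linftyOpNormedAlgebra
  letI : NormedAlgebra ℚ (Matrix (Fin n) (Fin n) ℝ) := Matrix.linftyOpNormedAlgebra
  letI : NormedAlgebra ℚ (Matrix (Fin n) (Fin n) ℂ) := Matrix.linftyOpNormedAlgebra
  have hc : Continuous ((algebraMap ℝ ℂ).mapMatrix :
      Matrix (Fin n) (Fin n) ℝ →+* Matrix (Fin n) (Fin n) ℂ) := by
    show Continuous fun M : Matrix (Fin n) (Fin n) ℝ => M.map (algebraMap ℝ ℂ)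
    exact Continuous.matrix_map continuous_id Complex.continuous_ofReal
  exact map_exp ((algebraMap ℝ ℂ).mapMatrix) hc M

end Stmt3Aux
namespace Stmt3Aux

lemma eval_charpoly {K : Type*} [Field K] {n : ℕ} (M : Matrix (Fin n) (Fin n) K) (x : K) :
    M.charpoly.eval x = (x • (1 : Matrix (Fin n) (Fin n) K) - M).det := by
  rw [Matrix.charpoly, show (Polynomial.eval x : Polynomial K → K) = Polynomial.evalRingHom x from rfl,
    RingHom.map_det]
  congr 1
  ext i j
  by_cases h : i = j
  · subst h
    simp [RingHom.mapMatrix_apply, Matrix.map_apply, Matrix.charmatrix_apply_eq,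
      Matrix.one_apply, Matrix.smul_apply]
  · simp [RingHom.mapMatrix_apply, Matrix.map_apply, Matrix.charmatrix_apply_ne _ _ _ h,
      Matrix.one_apply_ne h, Matrix.smul_apply]

lemma isRoot_charpoly_iff {n : ℕ} (A : Matrix (Fin n) (Fin n) ℂ) (μ : ℂ) :
    A.charpoly.IsRoot μ ↔ ∃ v : Fin n → ℂ, v ≠ 0 ∧ A *ᵥ v = μ • v := by
  rw [Polynomial.IsRoot, eval_charpoly, ← Matrix.exists_mulVec_eq_zero_iff]
  constructor
  · rintro ⟨v, hv, hv0⟩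
    refine ⟨v, hv, ?_⟩
    rw [Matrix.sub_mulVec, Matrix.smul_mulVec, Matrix.one_mulVec, sub_eq_zero] at hv0
    exact hv0.symm
  · rintro ⟨v, hv, hv0⟩
    refine ⟨v, hv, ?_⟩
    rw [Matrix.sub_mulVec, Matrix.smul_mulVec, Matrix.one_mulVec, sub_eq_zero, hv0]

end Stmt3Aux
namespace Stmt3Aux

lemma tendsto_pow_mul_exp_neg {j : ℕ} {r : ℝ} (hr : r < 0) :
    Tendsto (fun t : ℝ => t ^ j * Real.exp (t * r)) atTop (nhds 0) := by
  set c : ℝ := -r with hc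
  have hc0 : 0 < c := by simp [hc]; linarith
  have h1 : Tendsto (fun t : ℝ => c * t) atTop atTop :=
    Tendsto.const_mul_atTop hc0 tendsto_id
  have h2 : Tendsto (fun t : ℝ => (c * t) ^ j * Real.exp (-(c * t))) atTop (nhds 0) :=
    (Real.tendsto_pow_mul_exp_neg_atTop_nhds_zero j).comp h1
  have h3 := h2.const_mul ((c ^ j)⁻¹)
  rw [mul_zero] at h3
  refine h3.congr fun t => ?_
  rw [mul_pow]
  have : Real.exp (-(c * t)) = Real.exp (t * r) := by rw [hc]; ring_nf
  rw [this]
  field_simp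

lemma tendsto_exp_smul_vec {n : ℕ} {μ : ℂ} (hμ : μ.re < 0) (j : ℕ) (b : ℝ) (w : Fin n → ℂ) :
    Tendsto (fun t : ℝ => Complex.exp ((t : ℂ) * μ) • ((t ^ j / b : ℝ) • w)) atTop
      (nhds 0) := by
  have hnorm : ∀ t : ℝ, 0 ≤ t →
      ‖Complex.exp ((t : ℂ) * μ) • ((t ^ j / b : ℝ) • w)‖
        = (t ^ j * Real.exp (t * μ.re)) * (|b⁻¹| * ‖w‖) := by
    intro t ht
    rw [norm_smul, norm_smul]
    have h1 : ‖Complex.exp ((t : ℂ) * μ)‖ = Real.exp (t * μ.re) := by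
      rw [Complex.norm_exp]
      congr 1
      simp [Complex.mul_re]
    have h2 : ‖(t ^ j / b : ℝ)‖ = t ^ j * |b⁻¹| := by
      rw [Real.norm_eq_abs, div_eq_mul_inv, abs_mul, abs_pow, abs_of_nonneg ht]
    rw [h1, h2]
    ring
  have hg : Tendsto (fun t : ℝ => (t ^ j * Real.exp (t * μ.re)) * (|b⁻¹| * ‖w‖)) atTop
      (nhds 0) := by
    simpa using (tendsto_pow_mul_exp_neg (j := j) hμ).mul_const (|b⁻¹| * ‖w‖)
  refine squeeze_zero_norm' ?_ hg
  filter_upwards [eventually_ge_atTop (0 : ℝ)] with t ht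
  exact le_of_eq (hnorm t ht)

lemma eq_zero_or_re_neg_of_tendsto {μ c : ℂ}
    (h : Tendsto (fun t : ℝ => Complex.exp ((t : ℂ) * μ)) atTop (nhds c)) :
    μ = 0 ∨ μ.re < 0 := by
  have hre : ∀ t : ℝ, ‖Complex.exp ((t : ℂ) * μ)‖ = Real.exp (t * μ.re) := by
    intro t
    rw [Complex.norm_exp]
    congr 1
    simp [Complex.mul_re]
  rcases lt_trichotomy μ.re 0 with h1 | h1 | h1
  · exact Or.inr h1
  · left
    by_contra hμ
    have him : μ.im ≠ 0 := by
      intro h2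
      exact hμ (Complex.ext h1 h2)
    -- norm of limit is 1
    have hnc : ‖c‖ = 1 := by
      have := h.norm
      have h2 : Tendsto (fun _ : ℝ => (1 : ℝ)) atTop (nhds ‖c‖) := by
        refine this.congr fun t => ?_
        rw [hre t, h1, mul_zero, Real.exp_zero]
      exact (tendsto_nhds_unique tendsto_const_nhds h2).symm
    -- shift trick
    set T : ℝ := Real.pi / μ.im with hT
    have hshift : Tendsto (fun t : ℝ => Complex.exp (((t + T : ℝ) : ℂ) * μ)) atTop (nhds c) :=
      h.comp (tendsto_atTop_add_const_right atTop T tendsto_id)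
    have hmul : ∀ t : ℝ, Complex.exp (((t + T : ℝ) : ℂ) * μ)
        = Complex.exp ((t : ℂ) * μ) * (-1) := by
      intro t
      rw [Complex.ofReal_add, add_mul, Complex.exp_add]
      congr 1
      have : ((T : ℂ)) * μ = Real.pi * Complex.I := by
        have hμeq : μ = (μ.im : ℂ) * Complex.I := by
          apply Complex.ext <;> simp [h1]
        have himc : (μ.im : ℂ) ≠ 0 := by exact_mod_cast him
        rw [hT, hμeq]
        push_cast
        field_simp
        simp [himc]
      rw [this, Complex.exp_pi_mul_I]
    have h2 : Tendsto (fun t : ℝ => Complex.exp ((t : ℂ) * μ) * (-1)) atTop (nhds (c * (-1))) :=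
      h.mul_const _
    have h3 : Tendsto (fun t : ℝ => Complex.exp ((t : ℂ) * μ) * (-1)) atTop (nhds c) := by
      refine hshift.congr fun t => (hmul t)
    have : c = c * (-1) := tendsto_nhds_unique h3 h2
    have hc0 : c = 0 := by
      have := this
      ring_nf at this ⊢
      linear_combination (this : c = -c) / 2
    rw [hc0, norm_zero] at hnc
    norm_num at hnc
  · exfalso
    have hatop : Tendsto (fun t : ℝ => Real.exp (t * μ.re)) atTop atTop :=
      Real.tendsto_exp_atTop.comp (Tendsto.atTop_mul_const h1 tendsto_id)
    have h2 : Tendsto (fun t : ℝ => ‖Complex.exp ((t : ℂ) * μ)‖) atTop atTop := by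
      refine hatop.congr fun t => (hre t).symm
    exact not_tendsto_atTop_of_tendsto_nhds h.norm h2

end Stmt3Aux
namespace Stmt3Aux

variable {K : Type*} [Field K] {N : ℕ}

lemma mulVecLin_pow (M : Matrix (Fin N) (Fin N) K) (k : ℕ) (w : Fin N → K) :
    (M ^ k) *ᵥ w = ((M.mulVecLin : Module.End K (Fin N → K)) ^ k) w := by
  induction k with
  | zero => simp
  | succ k ih =>
    rw [pow_succ', ← Matrix.mulVec_mulVec, ih, pow_succ']
    simp [Matrix.mulVecLin_apply]

lemma charpoly_mulVecLin (M : Matrix (Fin N) (Fin N) K) :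
    (M.mulVecLin : Module.End K (Fin N → K)).charpoly = M.charpoly := by
  have h := LinearMap.charpoly_toMatrix (M.mulVecLin : Module.End K (Fin N → K))
    (Pi.basisFun K (Fin N))
  rw [LinearMap.toMatrix_eq_toMatrix'] at h
  rw [← h]
  congr 1
  rw [← Matrix.toLin'_apply' M, LinearMap.toMatrix'_toLin']

lemma rootMult_eq_finrank_maxGen (M : Matrix (Fin N) (Fin N) K) :
    M.charpoly.rootMultiplicity 0
      = finrank K (Module.End.maxGenEigenspace (M.mulVecLin : Module.End K (Fin N → K)) 0) := by
  rw [Polynomial.rootMultiplicity_eq_natTrailingDegree',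
    ← charpoly_mulVecLin M, ← LinearMap.finrank_maxGenEigenspace_zero_eq]

lemma ker_le_maxGen (M : Matrix (Fin N) (Fin N) K) :
    LinearMap.ker M.mulVecLin
      ≤ Module.End.maxGenEigenspace (M.mulVecLin : Module.End K (Fin N → K)) 0 := by
  intro x hx
  rw [Module.End.mem_maxGenEigenspace]
  exact ⟨1, by simpa [LinearMap.mem_ker.1 hx] using rfl⟩

lemma pow_kill_of_rootMult_eq (M : Matrix (Fin N) (Fin N) K)
    (h : M.charpoly.rootMultiplicity 0 = finrank K (LinearMap.ker M.mulVecLin)) :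
    ∀ (m : ℕ) (x : Fin N → K), (M ^ m) *ᵥ x = 0 → M *ᵥ x = 0 := by
  have heq : LinearMap.ker M.mulVecLin
      = Module.End.maxGenEigenspace (M.mulVecLin : Module.End K (Fin N → K)) 0 := by
    apply Submodule.eq_of_le_of_finrank_le (ker_le_maxGen M)
    rw [← rootMult_eq_finrank_maxGen, h]
  intro m x hx
  have hx' : x ∈ Module.End.maxGenEigenspace (M.mulVecLin : Module.End K (Fin N → K)) 0 := by
    rw [Module.End.mem_maxGenEigenspace]
    refine ⟨m, by simpa [mulVecLin_pow] using hx⟩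
  rw [← heq] at hx'
  simpa using LinearMap.mem_ker.1 hx'

lemma exists_order_two (φ : Module.End K (Fin N → K)) :
    ∀ (k : ℕ) (x : Fin N → K), (φ ^ k) x = 0 → φ x ≠ 0 →
      ∃ u, φ (φ u) = 0 ∧ φ u ≠ 0 := by
  intro k
  induction k with
  | zero => intro x hx hx1; exfalso; apply hx1; simp at hx; simp [hx]
  | succ k ih =>
    intro x hx hx1
    by_cases h2 : φ (φ x) = 0
    · exact ⟨x, h2, hx1⟩
    · refine ih (φ x) ?_ h2
      have : (φ ^ (k + 1)) x = (φ ^ k) (φ x) := by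
        rw [pow_succ]
        rfl
      rw [← this, hx]

lemma rootMult_ge (M : Matrix (Fin N) (Fin N) K) :
    finrank K (LinearMap.ker M.mulVecLin) ≤ M.charpoly.rootMultiplicity 0 := by
  rw [rootMult_eq_finrank_maxGen]
  exact Submodule.finrank_mono (ker_le_maxGen M)

end Stmt3Aux
namespace Stmt3Aux

variable {N : ℕ}

lemma cmap_smul (M : Matrix (Fin N) (Fin N) ℝ) (t : ℝ) :
    (t • M).map (algebraMap ℝ ℂ) = t • M.map (algebraMap ℝ ℂ) := by
  ext i j
  simp [Matrix.map_apply, Matrix.smul_apply, Complex.real_smul]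

lemma cmap_pow (M : Matrix (Fin N) (Fin N) ℝ) (k : ℕ) :
    (M.map (algebraMap ℝ ℂ)) ^ k = (M ^ k).map (algebraMap ℝ ℂ) := by
  have h : ∀ (P : Matrix (Fin N) (Fin N) ℝ), P.map (algebraMap ℝ ℂ)
      = (algebraMap ℝ ℂ).mapMatrix P := fun _ => rfl
  rw [h, h, ← map_pow]

lemma re_mulVec (M : Matrix (Fin N) (Fin N) ℝ) (w : Fin N → ℂ) (i : Fin N) :
    ((M.map (algebraMap ℝ ℂ) *ᵥ w) i).re = (M *ᵥ fun j => (w j).re) i := by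
  simp only [Matrix.mulVec, dotProduct, Matrix.map_apply]
  rw [Complex.re_sum]
  refine Finset.sum_congr rfl fun j _ => ?_
  simp [Complex.re_ofReal_mul]

lemma im_mulVec (M : Matrix (Fin N) (Fin N) ℝ) (w : Fin N → ℂ) (i : Fin N) :
    ((M.map (algebraMap ℝ ℂ) *ᵥ w) i).im = (M *ᵥ fun j => (w j).im) i := by
  simp only [Matrix.mulVec, dotProduct, Matrix.map_apply]
  rw [Complex.im_sum]
  refine Finset.sum_congr rfl fun j _ => ?_
  simp [Complex.im_ofReal_mul]

lemma stab_complex (M : Matrix (Fin N) (Fin N) ℝ)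
    (h : ∀ (m : ℕ) (x : Fin N → ℝ), (M ^ m) *ᵥ x = 0 → M *ᵥ x = 0) :
    ∀ (m : ℕ) (w : Fin N → ℂ),
      ((M.map (algebraMap ℝ ℂ)) ^ m) *ᵥ w = 0 → (M.map (algebraMap ℝ ℂ)) *ᵥ w = 0 := by
  intro m w hw
  rw [cmap_pow] at hw
  have hre : (M ^ m) *ᵥ (fun j => (w j).re) = 0 := by
    funext i
    rw [← re_mulVec, hw]
    rfl
  have him : (M ^ m) *ᵥ (fun j => (w j).im) = 0 := by
    funext i
    rw [← im_mulVec, hw]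
    rfl
  have hre1 := h m _ hre
  have him1 := h m _ him
  funext i
  apply Complex.ext
  · rw [re_mulVec, hre1]; rfl
  · rw [im_mulVec, him1]; rfl

lemma exists_eigvec (A : Matrix (Fin N) (Fin N) ℂ) (μ : ℂ) :
    ∀ (k : ℕ) (w : Fin N → ℂ), w ≠ 0 →
      ((A - μ • (1 : Matrix (Fin N) (Fin N) ℂ)) ^ k) *ᵥ w = 0 →
      ∃ v, v ≠ 0 ∧ A *ᵥ v = μ • v := by
  set B := A - μ • (1 : Matrix (Fin N) (Fin N) ℂ) with hB
  have hBv : ∀ v, B *ᵥ v = 0 ↔ A *ᵥ v = μ • v := by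
    intro v
    rw [hB, Matrix.sub_mulVec, Matrix.smul_mulVec, Matrix.one_mulVec, sub_eq_zero]
  intro k
  induction k with
  | zero =>
    intro w hw h0
    exact absurd (by simpa using h0) hw
  | succ k ih =>
    intro w hw h0
    by_cases h1 : (B ^ k) *ᵥ w = 0
    · exact ih w hw h1
    · refine ⟨(B ^ k) *ᵥ w, h1, ?_⟩
      rw [← hBv]
      rw [Matrix.mulVec_mulVec, ← pow_succ', h0]

end Stmt3Aux

open Stmt3Aux

theorem stmt_3 {N : ℕ} (G : Matrix (Fin N) (Fin N) ℝ) :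
    (∃ P : Matrix (Fin N) (Fin N) ℝ,
        Tendsto (fun t : ℝ => NormedSpace.exp (t • G)) atTop (nhds P)) ↔
      ((∀ μ ∈ (G.charpoly.map (algebraMap ℝ ℂ)).roots, μ ≠ 0 → μ.re < 0) ∧
        G.charpoly.rootMultiplicity 0 =
          Module.finrank ℝ (LinearMap.ker G.mulVecLin)) := by
  classical
  set A : Matrix (Fin N) (Fin N) ℂ := G.map (algebraMap ℝ ℂ) with hA
  have hmapc : Continuous fun M : Matrix (Fin N) (Fin N) ℝ => M.map (algebraMap ℝ ℂ) :=
    Continuous.matrix_map continuous_id Complex.continuous_ofReal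
  have hexpmap : ∀ t : ℝ,
      (NormedSpace.exp (t • G)).map (algebraMap ℝ ℂ) = NormedSpace.exp (t • A) := by
    intro t
    rw [exp_map_complex, cmap_smul]
  -- continuity of mulVec against a fixed vector, complex case
  have hmvC : ∀ v : Fin N → ℂ, Continuous fun M : Matrix (Fin N) (Fin N) ℂ => M *ᵥ v := by
    intro v
    let L : Matrix (Fin N) (Fin N) ℂ →ₗ[ℂ] (Fin N → ℂ) :=
      { toFun := fun M => M *ᵥ v
        map_add' := fun M M' => Matrix.add_mulVec M M' v
        map_smul' := fun c M => Matrix.smul_mulVec c M v }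
    exact L.continuous_of_finiteDimensional
  have hmvR : ∀ v : Fin N → ℝ, Continuous fun M : Matrix (Fin N) (Fin N) ℝ => M *ᵥ v := by
    intro v
    let L : Matrix (Fin N) (Fin N) ℝ →ₗ[ℝ] (Fin N → ℝ) :=
      { toFun := fun M => M *ᵥ v
        map_add' := fun M M' => Matrix.add_mulVec M M' v
        map_smul' := fun c M => Matrix.smul_mulVec c M v }
    exact L.continuous_of_finiteDimensional
  constructor
  · rintro ⟨P, hP⟩
    have hPC : Tendsto (fun t : ℝ => NormedSpace.exp (t • A)) atTop
        (nhds (P.map (algebraMap ℝ ℂ))) := by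
      refine ((hmapc.tendsto P).comp hP).congr fun t => hexpmap t
    constructor
    · intro μ hmem hμ0
      have hroot : ((G.charpoly.map (algebraMap ℝ ℂ))).IsRoot μ :=
        ((Polynomial.mem_roots').1 hmem).2
      have hrootA : A.charpoly.IsRoot μ := by
        rw [hA, Matrix.charpoly_map]
        exact hroot
      obtain ⟨v, hv0, hveig⟩ := (isRoot_charpoly_iff A μ).1 hrootA
      have hB1 : ((A - μ • (1 : Matrix (Fin N) (Fin N) ℂ)) ^ 1) *ᵥ v = 0 := by
        rw [pow_one, Matrix.sub_mulVec, Matrix.smul_mulVec, Matrix.one_mulVec,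
          sub_eq_zero, hveig]
      have hev : ∀ t : ℝ, NormedSpace.exp (t • A) *ᵥ v = Complex.exp ((t : ℂ) * μ) • v := by
        intro t
        rw [exp_smul_split A μ t, Matrix.smul_mulVec, exp_mulVec_eq_sum _ v hB1 t]
        simp
      obtain ⟨i, hvi⟩ : ∃ i, v i ≠ 0 := by
        by_contra h
        push_neg at h
        exact hv0 (funext h)
      have hcomp : Tendsto (fun t : ℝ => (NormedSpace.exp (t • A) *ᵥ v) i) atTop
          (nhds ((P.map (algebraMap ℝ ℂ) *ᵥ v) i)) := by
        have hc : Continuous fun M : Matrix (Fin N) (Fin N) ℂ => (M *ᵥ v) i :=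
          (continuous_apply i).comp (hmvC v)
        exact (hc.tendsto _).comp hPC
      have hexp : Tendsto (fun t : ℝ => Complex.exp ((t : ℂ) * μ)) atTop
          (nhds ((P.map (algebraMap ℝ ℂ) *ᵥ v) i * (v i)⁻¹)) := by
        refine (hcomp.mul_const ((v i)⁻¹)).congr fun t => ?_
        rw [hev t, Pi.smul_apply, smul_eq_mul, mul_inv_cancel_right₀ hvi]
      rcases eq_zero_or_re_neg_of_tendsto hexp with h0 | hneg
      · exact absurd h0 hμ0
      · exact hneg
    · refine le_antisymm ?_ (rootMult_ge G)
      by_contra hlt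
      push_neg at hlt
      have hne : Module.finrank ℝ (LinearMap.ker G.mulVecLin)
          ≠ Module.finrank ℝ (Module.End.maxGenEigenspace
            (G.mulVecLin : Module.End ℝ (Fin N → ℝ)) 0) := by
        intro he
        rw [rootMult_eq_finrank_maxGen, ← he] at hlt
        exact lt_irrefl _ hlt
      have hkm : LinearMap.ker G.mulVecLin
          ≠ Module.End.maxGenEigenspace (G.mulVecLin : Module.End ℝ (Fin N → ℝ)) 0 := by
        intro he
        exact hne (by rw [he])
      obtain ⟨x, hx1, hx2⟩ : ∃ x, x ∈ Module.End.maxGenEigenspace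
          (G.mulVecLin : Module.End ℝ (Fin N → ℝ)) 0 ∧ x ∉ LinearMap.ker G.mulVecLin := by
        by_contra h
        push_neg at h
        exact hkm (le_antisymm (ker_le_maxGen G) h)
      obtain ⟨k, hk⟩ := (Module.End.mem_maxGenEigenspace _ _ _).1 hx1
      simp only [zero_smul, sub_zero] at hk
      have hφx : G.mulVecLin x ≠ 0 := fun h => hx2 (LinearMap.mem_ker.2 h)
      obtain ⟨u, hu2, hu1⟩ := exists_order_two G.mulVecLin k x hk hφx
      have hG2 : (G ^ 2) *ᵥ u = 0 := by
        rw [mulVecLin_pow, pow_two]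
        exact hu2
      have hGu : G *ᵥ u ≠ 0 := by
        simpa [Matrix.mulVecLin_apply] using hu1
      have hform : ∀ t : ℝ, NormedSpace.exp (t • G) *ᵥ u = u + t • (G *ᵥ u) := by
        intro t
        rw [exp_mulVec_eq_sum G u hG2 t, Finset.sum_range_succ, Finset.sum_range_one]
        norm_num
      obtain ⟨i, hui⟩ : ∃ i, (G *ᵥ u) i ≠ 0 := by
        by_contra h
        push_neg at h
        exact hGu (funext h)
      have hcomp : Tendsto (fun t : ℝ => u i + t * (G *ᵥ u) i) atTop (nhds ((P *ᵥ u) i)) := by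
        have hc : Continuous fun M : Matrix (Fin N) (Fin N) ℝ => (M *ᵥ u) i :=
          (continuous_apply i).comp (hmvR u)
        refine ((hc.tendsto P).comp hP).congr fun t => ?_
        show (NormedSpace.exp (t • G) *ᵥ u) i = _
        rw [hform t]
        simp
      have hid : Tendsto (fun t : ℝ => t) atTop
          (nhds (((P *ᵥ u) i - u i) * ((G *ᵥ u) i)⁻¹)) := by
        refine ((hcomp.sub_const (u i)).mul_const (((G *ᵥ u) i)⁻¹)).congr fun t => ?_
        field_simp
        ring
      exact absurd hid (not_tendsto_nhds_of_tendsto_atTop tendsto_id _)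
  · rintro ⟨h1, h2⟩
    have hstabR := pow_kill_of_rootMult_eq G h2
    have hstabC' := stab_complex G hstabR
    have hstabC : ∀ (m : ℕ) (w : Fin N → ℂ), (A ^ m) *ᵥ w = 0 → A *ᵥ w = 0 := by
      rw [hA]
      exact hstabC'
    have hmapne : G.charpoly.map (algebraMap ℝ ℂ) ≠ 0 :=
      ((G.charpoly_monic).map _).ne_zero
    have key : ∀ w : Fin N → ℂ, ∃ L : Fin N → ℂ,
        Tendsto (fun t : ℝ => NormedSpace.exp (t • A) *ᵥ w) atTop (nhds L) := by
      intro w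
      have hw : w ∈ ⨆ μ : ℂ, Module.End.maxGenEigenspace
          (A.mulVecLin : Module.End ℂ (Fin N → ℂ)) μ := by
        rw [Module.End.iSup_maxGenEigenspace_eq_top]
        exact Submodule.mem_top
      refine Submodule.iSup_induction (motive := fun y => ∃ L : Fin N → ℂ,
          Tendsto (fun t : ℝ => NormedSpace.exp (t • A) *ᵥ y) atTop (nhds L)) _ hw ?_ ?_ ?_
      · intro μ y hyμ
        obtain ⟨k, hk⟩ := (Module.End.mem_maxGenEigenspace _ _ _).1 hyμ
        have hEnd : (A - μ • (1 : Matrix (Fin N) (Fin N) ℂ)).mulVecLin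
            = A.mulVecLin - μ • (1 : Module.End ℂ (Fin N → ℂ)) := by
          apply LinearMap.ext
          intro z
          simp [Matrix.mulVecLin_apply, Matrix.sub_mulVec, Matrix.smul_mulVec,
            Matrix.one_mulVec, LinearMap.sub_apply, LinearMap.smul_apply, Module.End.one_apply]
        have hmat : ((A - μ • (1 : Matrix (Fin N) (Fin N) ℂ)) ^ k) *ᵥ y = 0 := by
          rw [mulVecLin_pow, hEnd]
          exact hk
        by_cases hμ0 : μ = 0
        · subst hμ0
          have hk' : (A ^ k) *ᵥ y = 0 := by simpa using hmat
          have hA1 : ((A) ^ 1) *ᵥ y = 0 := by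
            rw [pow_one]
            exact hstabC k y hk'
          refine ⟨y, ?_⟩
          have heq : ∀ t : ℝ, NormedSpace.exp (t • A) *ᵥ y = y := by
            intro t
            rw [exp_mulVec_eq_sum A y hA1 t]
            simp
          exact tendsto_const_nhds.congr fun t => (heq t).symm
        · by_cases hy0 : y = 0
          · exact ⟨0, by simp [hy0, Matrix.mulVec_zero]⟩
          · obtain ⟨v, hv0, hveig⟩ := exists_eigvec A μ k y hy0 hmat
            have hroot : μ ∈ (G.charpoly.map (algebraMap ℝ ℂ)).roots := by
              rw [Polynomial.mem_roots']
              refine ⟨hmapne, ?_⟩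
              rw [← Matrix.charpoly_map]
              exact (isRoot_charpoly_iff A μ).2 ⟨v, hv0, hveig⟩
            have hre : μ.re < 0 := h1 μ hroot hμ0
            refine ⟨0, ?_⟩
            have hform : ∀ t : ℝ, NormedSpace.exp (t • A) *ᵥ y
                = ∑ j ∈ Finset.range k, Complex.exp ((t : ℂ) * μ) •
                    ((t ^ j / j.factorial : ℝ) •
                      (((A - μ • (1 : Matrix (Fin N) (Fin N) ℂ)) ^ j) *ᵥ y)) := by
              intro t
              rw [exp_smul_split A μ t, Matrix.smul_mulVec,
                exp_mulVec_eq_sum _ y hmat t, Finset.smul_sum]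
            have hzero : Tendsto (fun t : ℝ => ∑ j ∈ Finset.range k,
                Complex.exp ((t : ℂ) * μ) • ((t ^ j / j.factorial : ℝ) •
                  (((A - μ • (1 : Matrix (Fin N) (Fin N) ℂ)) ^ j) *ᵥ y))) atTop
                (nhds 0) := by
              rw [show (0 : Fin N → ℂ) = ∑ _j ∈ Finset.range k, (0 : Fin N → ℂ) by simp]
              exact tendsto_finset_sum _ fun j _ => tendsto_exp_smul_vec hre j _ _
            exact hzero.congr fun t => (hform t).symm
      · exact ⟨0, by simp [Matrix.mulVec_zero]⟩
      · rintro y z ⟨Ly, hLy⟩ ⟨Lz, hLz⟩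
        exact ⟨Ly + Lz, (hLy.add hLz).congr fun t => (Matrix.mulVec_add _ _ _).symm⟩
    choose Lf hLf using key
    refine ⟨fun i j => (Lf (Pi.single j 1) i).re, ?_⟩
    refine tendsto_pi_nhds.2 ?_
    intro i
    rw [tendsto_pi_nhds]
    intro j
    have hentry : Tendsto (fun t : ℝ => (NormedSpace.exp (t • A)) i j) atTop
        (nhds (Lf (Pi.single j 1) i)) := by
      refine (((continuous_apply i).tendsto _).comp (hLf (Pi.single j 1))).congr fun t => ?_
      show (NormedSpace.exp (t • A) *ᵥ Pi.single j 1) i = _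
      simp [Matrix.mulVec_single]
    have hRentry : ∀ t : ℝ, NormedSpace.exp (t • G) i j
        = (NormedSpace.exp (t • A) i j).re := by
      intro t
      rw [← hexpmap t]
      simp [Matrix.map_apply]
    exact ((Complex.continuous_re.tendsto _).comp hentry).congr fun t => (hRentry t).symm
end

section
/- Let J be the 2×2 real matrix J = κ·[[cos φ, −sin φ],[sin φ, cos φ]] with κ > 0 and φ ∈ (π/2, π]. Let m ≥ 3 be an integer with π(m+2)/(2m) ≤ φ, and let v_1,…,v_m be the vertices of a regular m-gon centered at the origin in ℝ². Then for each i, the vector J v_i points into the convex hull of {v_1,…,v_m} at v_i; that is, there exist nonnegative coefficients L_{i,j} (j ≠ i) with J v_i = Σ_{j≠i} L_{i,j}(v_j − v_i). -/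
open Matrix Real

set_option maxHeartbeats 1000000 in
theorem stmt_5 (κ φ : ℝ) (hκ : 0 < κ) (hφ : φ ∈ Set.Ioc (π / 2) π)
    (m : ℕ) (hm : 3 ≤ m) (hmφ : π * (m + 2) / (2 * m) ≤ φ)
    (r θ₀ : ℝ) (hr : 0 < r)
    (v : Fin m → (Fin 2 → ℝ))
    (hv : ∀ i : Fin m,
      v i = fun s =>
        if s = 0 then r * Real.cos (2 * π * (i + 1) / m + θ₀)
        else r * Real.sin (2 * π * (i + 1) / m + θ₀))
    (J : Matrix (Fin 2) (Fin 2) ℝ)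
    (hJ : J = κ • !![Real.cos φ, -Real.sin φ; Real.sin φ, Real.cos φ]) :
    ∀ i : Fin m, ∃ L : Fin m → ℝ, (∀ j, 0 ≤ L j) ∧
      J.mulVec (v i) = ∑ j ∈ Finset.univ.erase i, L j • (v j - v i) := by
  intro i
  have hπ := Real.pi_pos
  have hm0 : (0:ℝ) < m := by exact_mod_cast (by omega : 0 < m)
  set δ : ℝ := 2 * π / m with hδdef
  have hδpos : 0 < δ := by positivity
  have hδle : δ ≤ 2 * π / 3 := by
    rw [hδdef]
    apply div_le_div_of_nonneg_left (by linarith) (by norm_num)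
    exact_mod_cast hm
  have hδltπ : δ < π := by linarith
  have hsinδ : 0 < Real.sin δ := Real.sin_pos_of_pos_of_lt_pi hδpos hδltπ
  have hcosδ : Real.cos δ < 1 := by
    have := Real.cos_lt_cos_of_nonneg_of_le_pi (le_refl 0) hδltπ.le hδpos
    simpa using this
  have hhalf : 0 < Real.sin (δ/2) := Real.sin_pos_of_pos_of_lt_pi (by linarith) (by linarith)
  have hφ1 : π/2 < φ := hφ.1
  have hφ2 : φ ≤ π := hφ.2
  have hsinφ : 0 ≤ Real.sin φ := Real.sin_nonneg_of_nonneg_of_le_pi (by linarith) hφ2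
  have hcosφ : Real.cos φ ≤ 0 := Real.cos_nonpos_of_pi_div_two_le_of_le hφ1.le (by linarith)
  have hmφ' : π/2 + δ/2 ≤ φ := by
    have h : π * (m + 2) / (2 * m) = π/2 + δ/2 := by
      rw [hδdef]; field_simp
    linarith [h ▸ hmφ]
  have hkey : Real.cos (φ - δ/2) ≤ 0 :=
    Real.cos_nonpos_of_pi_div_two_le_of_le (by linarith) (by linarith)
  -- half-angle identities
  have hsin2 : Real.sin δ = 2 * Real.sin (δ/2) * Real.cos (δ/2) := by
    have := Real.sin_two_mul (δ/2)
    rw [show 2 * (δ/2) = δ by ring] at this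
    linarith
  have hcos2 : Real.cos δ = 1 - 2 * Real.sin (δ/2)^2 := by
    have h1 := Real.cos_two_mul (δ/2)
    have h2 := Real.sin_sq_add_cos_sq (δ/2)
    rw [show 2 * (δ/2) = δ by ring] at h1
    nlinarith
  set A : ℝ := (-κ * Real.cos φ / (1 - Real.cos δ) + κ * Real.sin φ / Real.sin δ) / 2 with hA
  set B : ℝ := (-κ * Real.cos φ / (1 - Real.cos δ) - κ * Real.sin φ / Real.sin δ) / 2 with hB
  have h1c : (0:ℝ) < 1 - Real.cos δ := by linarith
  have hAnn : 0 ≤ A := by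
    rw [hA]
    have h1 : 0 ≤ -κ * Real.cos φ / (1 - Real.cos δ) := by
      apply div_nonneg _ h1c.le; nlinarith
    have h2 : 0 ≤ κ * Real.sin φ / Real.sin δ := by positivity
    linarith
  have hBnn : 0 ≤ B := by
    rw [hB]
    have hkey' := Real.cos_sub φ (δ/2)
    have h3 : κ * Real.sin φ / Real.sin δ ≤ -κ * Real.cos φ / (1 - Real.cos δ) := by
      rw [div_le_div_iff₀ hsinδ h1c]
      have hstep : Real.cos φ * Real.cos (δ/2) + Real.sin φ * Real.sin (δ/2) ≤ 0 := by
        rw [← Real.cos_sub]; exact hkey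
      have hmul := mul_le_mul_of_nonneg_left hstep
        (by positivity : (0:ℝ) ≤ 2 * κ * Real.sin (δ/2))
      rw [hsin2, hcos2]
      nlinarith [hmul]
    linarith
  -- neighbors
  have hmlt : ∀ n : ℕ, n % m < m := fun n => Nat.mod_lt _ (by omega)
  set j₁ : Fin m := ⟨(i.val + 1) % m, hmlt _⟩ with hj₁
  set j₂ : Fin m := ⟨(i.val + (m - 1)) % m, hmlt _⟩ with hj₂
  have hj₁i : j₁ ≠ i := by
    simp only [hj₁, Fin.ne_iff_vne]
    intro h
    have hi := i.isLt
    rcases Nat.lt_or_ge (i.val + 1) m with h'|h'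
    · rw [Nat.mod_eq_of_lt h'] at h; omega
    · have : i.val = m - 1 := by omega
      rw [this] at h; simp [Nat.sub_add_cancel (by omega : 1 ≤ m)] at h; omega
  have hj₂i : j₂ ≠ i := by
    simp only [hj₂, Fin.ne_iff_vne]
    intro h
    have hi := i.isLt
    rcases Nat.eq_zero_or_pos i.val with h0|h0
    · rw [h0, Nat.zero_add, Nat.mod_eq_of_lt (by omega)] at h; omega
    · have he : i.val + (m - 1) = m + (i.val - 1) := by omega
      rw [he, Nat.add_mod_left, Nat.mod_eq_of_lt (by omega)] at h
      omega
  have hj₁₂ : j₁ ≠ j₂ := by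
    simp only [hj₁, hj₂, Fin.ne_iff_vne]
    intro h
    have hi := i.isLt
    rcases Nat.lt_or_ge (i.val + 1) m with h'|h'
    · rw [Nat.mod_eq_of_lt h'] at h
      rcases Nat.eq_zero_or_pos i.val with h0|h0
      · rw [h0, Nat.zero_add, Nat.mod_eq_of_lt (by omega)] at h; omega
      · have he : i.val + (m - 1) = m + (i.val - 1) := by omega
        rw [he, Nat.add_mod_left, Nat.mod_eq_of_lt (by omega)] at h; omega
    · have h1 : i.val = m - 1 := by omega
      have he : i.val + 1 = m := by omega
      rw [he, Nat.mod_self] at h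
      have he2 : i.val + (m - 1) = m + (i.val - 1) := by omega
      rw [he2, Nat.add_mod_left, Nat.mod_eq_of_lt (by omega)] at h; omega
  -- angle lemmas
  set α : ℝ := 2 * π * ((i.val : ℝ) + 1) / m + θ₀ with hα
  have hmne : (m:ℝ) ≠ 0 := ne_of_gt hm0
  have hval1 : ((j₁.val : ℕ) : ℝ) = (i.val : ℝ) + 1 - m * (((i.val + 1) / m : ℕ) : ℝ) := by
    have h := Nat.mod_add_div (i.val + 1) m
    have h2 : ((j₁.val : ℕ) : ℝ) + (m : ℝ) * (((i.val + 1) / m : ℕ) : ℝ) = (i.val : ℝ) + 1 := by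
      simp only [hj₁]; exact_mod_cast h
    linarith
  obtain ⟨n₁, hang1⟩ : ∃ n : ℤ, 2 * π * ((j₁.val : ℝ) + 1) / m + θ₀ = (α + δ) - (n : ℝ) * (2 * π) := by
    refine ⟨(((i.val + 1) / m : ℕ) : ℤ), ?_⟩
    rw [hval1, hα, hδdef, Int.cast_natCast]
    generalize ((((i.val + 1) / m : ℕ)) : ℝ) = k
    field_simp
    ring
  have hval2 : ((j₂.val : ℕ) : ℝ) = (i.val : ℝ) + ((m:ℝ) - 1) - m * (((i.val + (m - 1)) / m : ℕ) : ℝ) := by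
    have h := Nat.mod_add_div (i.val + (m - 1)) m
    have h2 : ((j₂.val : ℕ) : ℝ) + (m : ℝ) * (((i.val + (m - 1)) / m : ℕ) : ℝ)
        = (i.val : ℝ) + (((m - 1 : ℕ)) : ℝ) := by
      simp only [hj₂]; exact_mod_cast h
    have h3 : (((m - 1 : ℕ)) : ℝ) = (m : ℝ) - 1 := by
      have : (1:ℕ) ≤ m := by omega
      push_cast [this]; ring
    rw [h3] at h2
    linarith
  obtain ⟨n₂, hang2⟩ : ∃ n : ℤ, 2 * π * ((j₂.val : ℝ) + 1) / m + θ₀ = (α - δ) + (n : ℝ) * (2 * π) := by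
    refine ⟨1 - (((i.val + (m - 1)) / m : ℕ) : ℤ), ?_⟩
    rw [hval2, hα, hδdef, Int.cast_sub, Int.cast_one, Int.cast_natCast]
    generalize ((((i.val + (m - 1)) / m : ℕ)) : ℝ) = k
    field_simp
    ring
  have hc1 : Real.cos (2 * π * ((j₁.val : ℝ) + 1) / m + θ₀) = Real.cos (α + δ) := by
    rw [hang1, Real.cos_sub_int_mul_two_pi]
  have hs1 : Real.sin (2 * π * ((j₁.val : ℝ) + 1) / m + θ₀) = Real.sin (α + δ) := by
    rw [hang1, Real.sin_sub_int_mul_two_pi]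
  have hc2 : Real.cos (2 * π * ((j₂.val : ℝ) + 1) / m + θ₀) = Real.cos (α - δ) := by
    rw [hang2, Real.cos_add_int_mul_two_pi]
  have hs2 : Real.sin (2 * π * ((j₂.val : ℝ) + 1) / m + θ₀) = Real.sin (α - δ) := by
    rw [hang2, Real.sin_add_int_mul_two_pi]
  refine ⟨fun j => if j = j₁ then A else if j = j₂ then B else 0, fun j => ?_, ?_⟩
  · dsimp only
    split_ifs
    · exact hAnn
    · exact hBnn
    · exact le_rfl
  · have hsum : (∑ j ∈ Finset.univ.erase i,
        (if j = j₁ then A else if j = j₂ then B else 0) • (v j - v i))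
        = A • (v j₁ - v i) + B • (v j₂ - v i) := by
      have hterm : ∀ j ∈ Finset.univ.erase i,
          (if j = j₁ then A else if j = j₂ then B else 0) • (v j - v i)
          = (if j = j₁ then A • (v j₁ - v i) else 0)
            + (if j = j₂ then B • (v j₂ - v i) else 0) := by
        intro j _
        by_cases h1 : j = j₁
        · subst h1; simp [hj₁₂]
        · by_cases h2 : j = j₂
          · subst h2; simp [h1]
          · simp [h1, h2]
      rw [Finset.sum_congr rfl hterm, Finset.sum_add_distrib,
        Finset.sum_ite_eq' _ j₁, Finset.sum_ite_eq' _ j₂]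
      simp [Finset.mem_erase, hj₁i, hj₂i]
    rw [hsum, hJ]
    funext s
    rw [hv i, hv j₁, hv j₂]
    fin_cases s
    · simp only [Matrix.mulVec, dotProduct, Fin.sum_univ_two, Matrix.smul_apply,
        Matrix.cons_val', Matrix.cons_val_zero, Matrix.cons_val_one, Matrix.head_cons,
        Matrix.head_fin_const, Pi.add_apply, Pi.smul_apply, Pi.sub_apply, smul_eq_mul,
        Matrix.cons_val_fin_one, Matrix.empty_val', Fin.zero_eta, Fin.mk_one]
      simp only [reduceIte, if_neg (show (1:Fin 2) ≠ 0 from by decide), if_pos rfl]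
      rw [← hα, hc1, hc2, Real.cos_add α δ, Real.cos_sub α δ, hA, hB]
      simp only [Matrix.of_apply, Matrix.cons_val', Matrix.cons_val_zero, Matrix.cons_val_one,
        Matrix.head_cons, Matrix.head_fin_const, Matrix.empty_val', Matrix.cons_val_fin_one]
      field_simp
      ring
    · simp only [Matrix.mulVec, dotProduct, Fin.sum_univ_two, Matrix.smul_apply,
        Matrix.cons_val', Matrix.cons_val_zero, Matrix.cons_val_one, Matrix.head_cons,
        Matrix.head_fin_const, Pi.add_apply, Pi.smul_apply, Pi.sub_apply, smul_eq_mul,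
        Matrix.cons_val_fin_one, Matrix.empty_val', Fin.zero_eta, Fin.mk_one]
      simp only [reduceIte, if_neg (show (1:Fin 2) ≠ 0 from by decide), if_pos rfl]
      rw [← hα, hs1, hs2, Real.sin_add α δ, Real.sin_sub α δ, hA, hB]
      simp only [Matrix.of_apply, Matrix.cons_val', Matrix.cons_val_zero, Matrix.cons_val_one,
        Matrix.head_cons, Matrix.head_fin_const, Matrix.empty_val', Matrix.cons_val_fin_one]
      field_simp
      ring
end

section
/- Let λ < 0 and c ∈ {0,1}, and let u(1),…,u(s) be positive reals chosen recursively with u(1) = 1 and u(j)λ + c·u(j+1) < 0 for all j < s. For f ∈ {−1,1}^s define u_f = (f(j)u(j))_{j=1}^s ∈ ℝ^s, and let J be the s×s upper bidiagonal matrix with λ on the diagonal and c on the superdiagonal. Then for every f ∈ {−1,1}^s and every j ≤ s, the sign of the j-th coordinate of J u_f equals −f(j). -/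
open Matrix

theorem stmt_6 {s : ℕ} (lam c : ℝ) (hlam : lam < 0) (hc : c = 0 ∨ c = 1)
    (u : Fin s → ℝ) (hu : ∀ j, 0 < u j)
    (hu1 : ∀ h : 0 < s, u ⟨0, h⟩ = 1)
    (hrec : ∀ j : Fin s, ∀ h : (j : ℕ) + 1 < s, u j * lam + c * u ⟨j + 1, h⟩ < 0)
    (J : Matrix (Fin s) (Fin s) ℝ)
    (hJ : ∀ i j : Fin s, J i j =
      if i = j then lam else if (j : ℕ) = (i : ℕ) + 1 then c else 0)
    (f : Fin s → ℝ) (hf : ∀ j, f j = 1 ∨ f j = -1) :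
    ∀ j : Fin s, Real.sign ((J.mulVec fun i => f i * u i) j) = -f j := by
  intro j
  have hval : (J.mulVec fun i => f i * u i) j =
      lam * (f j * u j) +
        (if h : (j : ℕ) + 1 < s then c * (f ⟨j + 1, h⟩ * u ⟨j + 1, h⟩) else 0) := by
    unfold Matrix.mulVec dotProduct
    by_cases h : (j : ℕ) + 1 < s
    · rw [dif_pos h]
      have : ∀ i : Fin s, J j i * (f i * u i) =
          (if i = j then lam * (f j * u j) else 0) +
          (if i = (⟨j + 1, h⟩ : Fin s) then c * (f ⟨j + 1, h⟩ * u ⟨j + 1, h⟩) else 0) := by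
        intro i
        rw [hJ]
        by_cases h1 : i = j
        · subst h1
          simp only [if_pos rfl]
          have : ¬ (i = (⟨(i : ℕ) + 1, h⟩ : Fin s)) := by
            intro he
            have := congrArg Fin.val he
            simp at this
          rw [if_neg this]
          simp only [if_true]
          ring
        · rw [if_neg h1, if_neg fun he => h1 he.symm]
          by_cases h2 : i = (⟨(j : ℕ) + 1, h⟩ : Fin s)
          · subst h2
            simp only [if_pos rfl, if_pos rfl, if_true]
            ring
          · rw [if_neg h2]
            have : ¬ ((i : ℕ) = (j : ℕ) + 1) := by
              intro he
              exact h2 (Fin.ext he)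
            rw [if_neg this]
            ring
      rw [Finset.sum_congr rfl fun i _ => this i, Finset.sum_add_distrib,
        Finset.sum_ite_eq' Finset.univ j, Finset.sum_ite_eq' Finset.univ,
        if_pos (Finset.mem_univ _), if_pos (Finset.mem_univ _)]
    · rw [dif_neg h]
      have : ∀ i : Fin s, J j i * (f i * u i) =
          (if i = j then lam * (f j * u j) else 0) := by
        intro i
        rw [hJ]
        by_cases h1 : i = j
        · subst h1
          simp only [if_pos rfl, if_true]
          try ring
        · rw [if_neg h1, if_neg fun he => h1 he.symm]
          have : ¬ ((i : ℕ) = (j : ℕ) + 1) := by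
            intro he
            exact h (he ▸ i.isLt)
          rw [if_neg this]
          ring
      rw [Finset.sum_congr rfl fun i _ => this i,
        Finset.sum_ite_eq' Finset.univ j, if_pos (Finset.mem_univ _)]
      ring
  rw [hval]
  have huj := hu j
  by_cases h : (j : ℕ) + 1 < s
  · rw [dif_pos h]
    have hr := hrec j h
    have huj' := hu ⟨(j : ℕ) + 1, h⟩
    rcases hf j with hfj | hfj <;> rcases hf ⟨(j : ℕ) + 1, h⟩ with hfj' | hfj' <;>
      rw [hfj, hfj'] <;> rcases hc with hc | hc <;> subst hc
    · rw [Real.sign_of_neg (by nlinarith)]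
    · rw [Real.sign_of_neg (by nlinarith)]
    · rw [Real.sign_of_neg (by nlinarith)]
    · rw [Real.sign_of_neg (by nlinarith)]
    · rw [Real.sign_of_pos (by nlinarith)]; norm_num
    · rw [Real.sign_of_pos (by nlinarith)]; norm_num
    · rw [Real.sign_of_pos (by nlinarith)]; norm_num
    · rw [Real.sign_of_pos (by nlinarith)]; norm_num
  · rw [dif_neg h, add_zero]
    rcases hf j with hfj | hfj <;> rw [hfj]
    · rw [Real.sign_of_neg (by nlinarith)]
    · rw [Real.sign_of_pos (by nlinarith)]; norm_num
end

section
/- Let Θ = 0, A = α = 1, and √2 ≤ a < 2, and set σ²(x) = 1 + a x + x². Then there do NOT exist real numbers x₁ < x₂ < x₃ such that all of the following hold: σ²(x₂) + x₂(x₃−x₂) ≥ 0 with strict positivity structure as below, and specifically the off-diagonal entries Ξ₁₂, Ξ₁₃, Ξ₂₁, Ξ₂₃, Ξ₃₁, Ξ₃₂ are all nonnegative, where Ξ₁₂ = −σ²(x₁) − x₁(x₃−x₁), Ξ₁₃ = σ²(x₁) − x₁(x₁−x₂), Ξ₂₁ = σ²(x₂) + x₂(x₃−x₂), Ξ₂₃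 = σ²(x₂) − x₂(x₂−x₁), Ξ₃₁ = σ²(x₃) − x₃(x₃−x₂), Ξ₃₂ = −σ²(x₃) + x₃(x₃−x₁). -/
theorem stmt_11 (a : ℝ) (ha1 : Real.sqrt 2 ≤ a) (ha2 : a < 2) :
    ¬ ∃ x₁ x₂ x₃ : ℝ, x₁ < x₂ ∧ x₂ < x₃ ∧
      (0 ≤ -(1 + a * x₁ + x₁ ^ 2) - x₁ * (x₃ - x₁)) ∧
      (0 ≤ (1 + a * x₁ + x₁ ^ 2) - x₁ * (x₁ - x₂)) ∧
      (0 ≤ (1 + a * x₂ + x₂ ^ 2) + x₂ * (x₃ - x₂)) ∧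
      (0 ≤ (1 + a * x₂ + x₂ ^ 2) - x₂ * (x₂ - x₁)) ∧
      (0 ≤ (1 + a * x₃ + x₃ ^ 2) - x₃ * (x₃ - x₂)) ∧
      (0 ≤ -(1 + a * x₃ + x₃ ^ 2) + x₃ * (x₃ - x₁)) := by
  rintro ⟨x₁, x₂, x₃, h12, h23, c1, c2, c3, c4, c5, c6⟩
  have hs : Real.sqrt 2 ^ 2 = 2 := Real.sq_sqrt (by norm_num)
  have hs0 : (0:ℝ) ≤ Real.sqrt 2 := Real.sqrt_nonneg 2
  have ha0 : 0 < a := by nlinarith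
  have hasq : 2 ≤ a ^ 2 := by nlinarith
  -- x₁ < 0
  have hx1 : x₁ < 0 := by nlinarith [c1, c2, mul_self_nonneg x₁]
  -- 0 < x₃
  have hx3 : 0 < x₃ := by nlinarith [c5, c6, mul_self_nonneg x₃]
  -- a + x₁ < 0
  have hax1 : a + x₁ < 0 := by nlinarith [c6]
  -- a + x₃ > a
  have hY : a < a + x₃ := by linarith
  have hX : a < -x₁ := by linarith
  -- key: a * (-x₁) * (a + x₃) ≤ (-x₁) + (a + x₃)
  have key : a * (-x₁) * (a + x₃) ≤ (-x₁) + (a + x₃) := by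
    nlinarith [mul_nonneg c2 (by linarith : (0:ℝ) ≤ a + x₃),
               mul_nonneg c3 (by linarith : (0:ℝ) ≤ -x₁)]
  have hY1 : 0 < a * (a + x₃) - 1 := by nlinarith [mul_pos ha0 hx3]
  have h1 : 0 < (-x₁ - a) * (a * (a + x₃) - 1) :=
    mul_pos (by linarith) hY1
  have h2 : 0 ≤ a * (a ^ 2 - 2) := mul_nonneg ha0.le (by linarith)
  have h3 : 0 < x₃ * (a ^ 2 - 1) := mul_pos hx3 (by nlinarith)
  nlinarith [key, h1, h2, h3]
end

section
/- Let W(t) = A exp(tL) S̃ ∈ ℝ^{M×M} where A ∈ ℝ^{M×R}, S̃ ∈ ℝ^{R×M}, L ∈ ℝ^{R×R}, and H ∈ ℝ^{M×N} satisfy A S̃ H = H, S̃ H G = L S̃ H for some G ∈ ℝ^{N×N}. Then W(t) H = H exp(tG) for all t ≥ 0; if moreover Hv = 1_M and Gv = 0 for some v ∈ ℝ^N, then each row of W(t) sums to 1. -/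
open Matrix

attribute [local instance] Matrix.linftyOpNormedRing Matrix.linftyOpNormedAlgebra
  Matrix.linftyOpNormedAddCommGroup Matrix.linftyOpNormedSpace

lemma intertwine_exp {R N : ℕ} (B : Matrix (Fin R) (Fin N) ℝ)
    (G : Matrix (Fin N) (Fin N) ℝ) (L : Matrix (Fin R) (Fin R) ℝ)
    (h : B * G = L * B) :
    B * NormedSpace.exp G = NormedSpace.exp L * B := by
  have key : ∀ n : ℕ, B * G ^ n = L ^ n * B := by
    intro n
    induction n with
    | zero => simp
    | succ n ih =>
      rw [pow_succ, ← Matrix.mul_assoc, ih, Matrix.mul_assoc, h, ← Matrix.mul_assoc,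
        ← pow_succ]
  let f : Matrix (Fin N) (Fin N) ℝ →ₗ[ℝ] Matrix (Fin R) (Fin N) ℝ :=
    { toFun := fun X => B * X
      map_add' := fun X Y => Matrix.mul_add _ _ _
      map_smul' := fun c X => (Matrix.mul_smul _ _ _) }
  let g : Matrix (Fin R) (Fin R) ℝ →ₗ[ℝ] Matrix (Fin R) (Fin N) ℝ :=
    { toFun := fun X => X * B
      map_add' := fun X Y => Matrix.add_mul _ _ _
      map_smul' := fun c X => (Matrix.smul_mul _ _ _) }
  have hf : Continuous f := f.continuous_of_finiteDimensional
  have hg : Continuous g := g.continuous_of_finiteDimensional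
  have hG := NormedSpace.expSeries_summable' (𝕂 := ℝ) G
  have hL := NormedSpace.expSeries_summable' (𝕂 := ℝ) L
  have h1 : B * NormedSpace.exp G = ∑' n : ℕ, B * (((n.factorial : ℝ))⁻¹ • G ^ n) := by
    rw [NormedSpace.exp_eq_tsum (𝕂 := ℝ)]
    exact (hG.hasSum.mapL ⟨f, hf⟩).tsum_eq.symm
  have h2 : NormedSpace.exp L * B = ∑' n : ℕ, (((n.factorial : ℝ))⁻¹ • L ^ n) * B := by
    rw [NormedSpace.exp_eq_tsum (𝕂 := ℝ)]
    exact (hL.hasSum.mapL ⟨g, hg⟩).tsum_eq.symm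
  rw [h1, h2]
  congr 1
  funext n
  rw [Matrix.mul_smul, Matrix.smul_mul, key n]

theorem stmt_19 {M R N : ℕ}
    (A : Matrix (Fin M) (Fin R) ℝ) (S' : Matrix (Fin R) (Fin M) ℝ)
    (L : Matrix (Fin R) (Fin R) ℝ) (H : Matrix (Fin M) (Fin N) ℝ)
    (G : Matrix (Fin N) (Fin N) ℝ)
    (hASH : A * S' * H = H) (hint : S' * H * G = L * (S' * H)) :
    (∀ t : ℝ, 0 ≤ t →
      (A * NormedSpace.exp (t • L) * S') * H = H * NormedSpace.exp (t • G)) ∧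
    (∀ v : Fin N → ℝ, H.mulVec v = (fun _ => (1 : ℝ)) → G.mulVec v = 0 →
      ∀ t : ℝ, 0 ≤ t →
        (A * NormedSpace.exp (t • L) * S').mulVec (fun _ => (1 : ℝ)) =
          fun _ => (1 : ℝ)) := by
  have main : ∀ t : ℝ,
      (A * NormedSpace.exp (t • L) * S') * H = H * NormedSpace.exp (t • G) := by
    intro t
    have h : (S' * H) * (t • G) = (t • L) * (S' * H) := by
      rw [Matrix.mul_smul, hint, Matrix.smul_mul]
    have key := intertwine_exp (S' * H) (t • G) (t • L) h
    calc (A * NormedSpace.exp (t • L) * S') * H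
        = A * (NormedSpace.exp (t • L) * (S' * H)) := by
          simp only [Matrix.mul_assoc]
      _ = A * ((S' * H) * NormedSpace.exp (t • G)) := by rw [← key]
      _ = (A * S' * H) * NormedSpace.exp (t • G) := by simp only [Matrix.mul_assoc]
      _ = H * NormedSpace.exp (t • G) := by rw [hASH]
  constructor
  · intro t _; exact main t
  · intro v hHv hGv t _
    have hexpv : (NormedSpace.exp (t • G)).mulVec v = v := by
      have : (t • G).mulVec v = 0 := by
        rw [Matrix.smul_mulVec, hGv, smul_zero]
      have hcomm : Commute (t • G) (1 : Matrix (Fin N) (Fin N) ℝ) := Commute.one_right _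
      -- exp(t•G) v = v since (t•G) v = 0: use exp = ∑ ...
      have hG := NormedSpace.expSeries_summable' (𝕂 := ℝ) (t • G)
      let f : Matrix (Fin N) (Fin N) ℝ →ₗ[ℝ] (Fin N → ℝ) :=
        { toFun := fun X => X.mulVec v
          map_add' := fun X Y => Matrix.add_mulVec _ _ _
          map_smul' := fun c X => by simp [Matrix.smul_mulVec] }
      have hf : Continuous f := f.continuous_of_finiteDimensional
      have h1 : (NormedSpace.exp (t • G)).mulVec v
          = ∑' n : ℕ, (((n.factorial : ℝ))⁻¹ • (t • G) ^ n).mulVec v := by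
        rw [NormedSpace.exp_eq_tsum (𝕂 := ℝ)]
        exact (hG.hasSum.mapL ⟨f, hf⟩).tsum_eq.symm
      have h2 : ∀ n : ℕ, ((t • G) ^ n).mulVec v = if n = 0 then v else 0 := by
        intro n
        cases n with
        | zero => simp [Matrix.one_mulVec]
        | succ n =>
          simp only [Nat.succ_ne_zero, if_false, pow_succ]
          rw [← Matrix.mulVec_mulVec, this, Matrix.mulVec_zero]
      rw [h1]
      have : ∀ n : ℕ, (((n.factorial : ℝ))⁻¹ • (t • G) ^ n).mulVec v
          = if n = 0 then v else 0 := by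
        intro n
        rw [Matrix.smul_mulVec, h2]
        cases n with
        | zero => simp
        | succ n => simp
      simp_rw [this]
      rw [tsum_eq_single 0]
      · simp
      · intro n hn; simp [hn]
    calc (A * NormedSpace.exp (t • L) * S').mulVec (fun _ => (1 : ℝ))
        = (A * NormedSpace.exp (t • L) * S').mulVec (H.mulVec v) := by rw [hHv]
      _ = ((A * NormedSpace.exp (t • L) * S') * H).mulVec v := by
          rw [Matrix.mulVec_mulVec]
      _ = (H * NormedSpace.exp (t • G)).mulVec v := by rw [main t]
      _ = H.mulVec ((NormedSpace.exp (t • G)).mulVec v) := by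
          rw [Matrix.mulVec_mulVec]
      _ = H.mulVec v := by rw [hexpv]
      _ = fun _ => (1 : ℝ) := hHv
end
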